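/- Let H be a graph on r vertices such that for every pair of nonadjacent vertices x, y of H, d(x) + d(y) ≥ r - t for some positive integer t. Then the vertex set of H can be partitioned into at most t vertex-disjoint paths. -/

import Mathlib

/-- `PathPartitionOn G D m` says that there are `m` pairwise vertex-disjoint paths of `G`,
all of whose vertices lie in `D`, whose vertex sets together cover `D`. -/
def PathPartitionOn {V : Type*} (G : SimpleGraph V) (D : Set V) (m : ℕ) : Prop :=
  ∃ (u v : Fin m → V) (p : ∀ i, G.Walk (u i) (v i)),
    (∀ i, (p i).IsPath) ∧
    (∀ i, ∀ x ∈ (p i).support, x ∈ D) ∧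
    (∀ i j, i ≠ j → ∀ x, x ∈ (p i).support → x ∉ (p j).support) ∧
    (∀ x ∈ D, ∃ i, x ∈ (p i).support)

open List

section Aux

variable {V : Type*} {G : SimpleGraph V}

variable {V : Type*} {G : SimpleGraph V}

def Good (G : SimpleGraph V) (L : List (List V)) : Prop :=
  (∀ l ∈ L, l ≠ []) ∧ (∀ l ∈ L, l.Chain' G.Adj) ∧ L.flatten.Nodup ∧ ∀ v, v ∈ L.flatten

lemma Good.perm {L L' : List (List V)} (h : Good G L) (hp : L ~ L') : Good G L' := by
  obtain ⟨h1, h2, h3, h4⟩ := h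
  have hf := hp.flatten
  exact ⟨fun l hl => h1 l (hp.mem_iff.2 hl), fun l hl => h2 l (hp.mem_iff.2 hl),
    hf.nodup_iff.1 h3, fun v => hf.mem_iff.1 (h4 v)⟩

lemma Good.reverse_head {l : List V} {L : List (List V)} (h : Good G (l :: L)) :
    Good G (l.reverse :: L) := by
  obtain ⟨h1, h2, h3, h4⟩ := h
  have hf : (l.reverse :: L).flatten ~ (l :: L).flatten := by
    simp only [flatten_cons]
    exact (l.reverse_perm).append_right _
  refine ⟨?_, ?_, hf.nodup_iff.2 h3, fun v => hf.mem_iff.2 (h4 v)⟩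
  · intro m hm
    rw [mem_cons] at hm
    rcases hm with rfl | hm
    · simp only [ne_eq, reverse_eq_nil_iff]; exact h1 l (by simp)
    · exact h1 m (by simp [hm])
  · intro m hm
    rw [mem_cons] at hm
    rcases hm with rfl | hm
    · show List.IsChain _ _; rw [isChain_reverse]
      exact (h2 l (by simp)).imp (fun _ _ hadj => hadj.symm)
    · exact h2 m (by simp [hm])

lemma Good.merge {l1 l2 : List V} {L : List (List V)} (h : Good G (l1 :: l2 :: L))
    (hadj : ∀ x ∈ l1.getLast?, ∀ y ∈ l2.head?, G.Adj x y) :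
    Good G ((l1 ++ l2) :: L) := by
  obtain ⟨h1, h2, h3, h4⟩ := h
  have hf : ((l1 ++ l2) :: L).flatten = (l1 :: l2 :: L).flatten := by
    simp [flatten_cons, append_assoc]
  refine ⟨?_, ?_, by rw [hf]; exact h3, fun v => by rw [hf]; exact h4 v⟩
  · intro m hm
    rw [mem_cons] at hm
    rcases hm with rfl | hm
    · have := h1 l1 (by simp)
      rcases l1 with _ | ⟨z, l1⟩
      · simp at this
      · simp
    · exact h1 m (by simp [hm])
  · intro m hm
    rw [mem_cons] at hm
    rcases hm with rfl | hm
    · exact isChain_append.2 ⟨h2 l1 (by simp), h2 l2 (by simp), hadj⟩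
    · exact h2 m (by simp [hm])

-- chain of a sublist split
lemma chain_split {q1 q2 : List V} {x y : V} (h : (q1 ++ x :: y :: q2).Chain' G.Adj) :
    (q1 ++ [x]).Chain' G.Adj ∧ (y :: q2).Chain' G.Adj ∧ G.Adj x y := by
  have h' : ((q1 ++ [x]) ++ y :: q2).Chain' G.Adj := by
    rwa [append_assoc, singleton_append]
  obtain ⟨c1, c2, c3⟩ := isChain_append.1 h'
  exact ⟨c1, c2, c3 x (by simp) y (by simp)⟩

lemma revchain {l : List V} (h : l.Chain' G.Adj) : l.reverse.Chain' G.Adj := by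
  show List.IsChain _ _; rw [isChain_reverse]
  exact h.imp (fun _ _ hadj => hadj.symm)

lemma Good.rot1 {l1 l2 q1 q2 : List V} {x y : V} {L : List (List V)}
    (h : Good G (l1 :: l2 :: (q1 ++ x :: y :: q2) :: L))
    (ha : ∀ a ∈ l1.head?, G.Adj a x) (hb : ∀ b ∈ l2.head?, G.Adj b y) :
    Good G ((l1.reverse ++ x :: q1.reverse) :: (l2.reverse ++ y :: q2) :: L) := by
  obtain ⟨h1, h2, h3, h4⟩ := h
  obtain ⟨c1, c2, cxy⟩ := chain_split (h2 (q1 ++ x :: y :: q2) (by simp))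
  have hf : ((l1.reverse ++ x :: q1.reverse) :: (l2.reverse ++ y :: q2) :: L).flatten ~
      (l1 :: l2 :: (q1 ++ x :: y :: q2) :: L).flatten := by
    simp only [flatten_cons]
    rw [← Multiset.coe_eq_coe]
    simp only [← Multiset.coe_add, Multiset.coe_reverse, ← Multiset.cons_coe,
      ← Multiset.singleton_add]
    abel
  refine ⟨?_, ?_, hf.nodup_iff.2 h3, fun v => hf.mem_iff.2 (h4 v)⟩
  · intro m hm
    rcases mem_cons.1 hm with rfl | hm
    · simp
    rcases mem_cons.1 hm with rfl | hm
    · simp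
    · exact h1 m (by simp [hm])
  · intro m hm
    rcases mem_cons.1 hm with rfl | hm
    · refine isChain_append.2 ⟨revchain (h2 l1 (by simp)), ?_, ?_⟩
      · have : (x :: q1.reverse) = (q1 ++ [x]).reverse := by simp
        rw [this]; exact revchain c1
      · intro u hu v hv
        rw [getLast?_reverse] at hu
        simp only [head?_cons, Option.mem_some_iff] at hv
        subst hv
        exact ha u hu
    rcases mem_cons.1 hm with rfl | hm
    · refine isChain_append.2 ⟨revchain (h2 l2 (by simp)), c2, ?_⟩
      intro u hu v hv
      rw [getLast?_reverse] at hu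
      simp only [head?_cons, Option.mem_some_iff] at hv
      subst hv
      exact hb u hu
    · exact h2 m (by simp [hm])

lemma Good.rot2 {l2 q1 q2 : List V} {x y : V} {L : List (List V)}
    (h : Good G ((q1 ++ x :: y :: q2) :: l2 :: L))
    (hb : ∀ b ∈ l2.head?, G.Adj b x) (ha : ∀ a ∈ (q1 ++ x :: y :: q2).head?, G.Adj a y) :
    Good G ((l2.reverse ++ x :: q1.reverse ++ y :: q2) :: L) := by
  obtain ⟨h1, h2, h3, h4⟩ := h
  obtain ⟨c1, c2, cxy⟩ := chain_split (h2 (q1 ++ x :: y :: q2) (by simp))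
  have hf : ((l2.reverse ++ x :: q1.reverse ++ y :: q2) :: L).flatten ~
      ((q1 ++ x :: y :: q2) :: l2 :: L).flatten := by
    simp only [flatten_cons]
    rw [← Multiset.coe_eq_coe]
    simp only [← Multiset.coe_add, Multiset.coe_reverse, ← Multiset.cons_coe,
      ← Multiset.singleton_add]
    abel
  have hhead : (q1 ++ [x]).head? = (q1 ++ x :: y :: q2).head? := by
    cases q1 <;> simp
  refine ⟨?_, ?_, hf.nodup_iff.2 h3, fun v => hf.mem_iff.2 (h4 v)⟩
  · intro m hm
    rcases mem_cons.1 hm with rfl | hm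
    · simp
    · exact h1 m (by simp [hm])
  · intro m hm
    rcases mem_cons.1 hm with rfl | hm
    · refine isChain_append.2 ⟨?_, c2, ?_⟩
      · refine isChain_append.2 ⟨revchain (h2 l2 (by simp)), ?_, ?_⟩
        · have : (x :: q1.reverse) = (q1 ++ [x]).reverse := by simp
          rw [this]; exact revchain c1
        · intro u hu v hv
          rw [getLast?_reverse] at hu
          simp only [head?_cons, Option.mem_some_iff] at hv
          subst hv
          exact hb u hu
      · intro u hu v hv
        have : (l2.reverse ++ x :: q1.reverse).getLast? = (q1 ++ [x]).head? := by
          rw [show (x :: q1.reverse) = (q1 ++ [x]).reverse by simp,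
            getLast?_append_of_ne_nil, getLast?_reverse]
          simp
        rw [this, hhead] at hu
        simp only [head?_cons, Option.mem_some_iff] at hv
        subst hv
        exact ha u hu
    · exact h2 m (by simp [hm])

lemma chain'_split_of_not {R : V → V → Prop} :
    ∀ l : List V, ¬ l.Chain' R → ∃ q1 x y q2, l = q1 ++ x :: y :: q2 ∧ ¬ R x y
  | [], h => absurd isChain_nil h
  | [x], h => absurd (isChain_singleton x) h
  | x :: y :: l, h => by
      change ¬ IsChain R (x :: y :: l) at h
      rw [isChain_cons_cons] at h
      by_cases hxy : R x y
      · have h' : ¬ (y :: l).Chain' R := fun hc => h ⟨hxy, hc⟩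
        obtain ⟨q1, u, v, q2, heq, huv⟩ := chain'_split_of_not (y :: l) h'
        exact ⟨x :: q1, u, v, q2, by rw [cons_append, heq], huv⟩
      · exact ⟨[], x, y, l, rfl, hxy⟩

lemma length_filter_cons (p : V → Prop) [DecidablePred p] (x : V) (l : List V) :
    ((x :: l).filter (fun v => p v)).length
      = (if p x then 1 else 0) + (l.filter (fun v => p v)).length := by
  rw [filter_cons]
  by_cases h : p x <;> simp [h, Nat.add_comm]

lemma count_bound [DecidableRel G.Adj] (a b : V) :
    ∀ (l : List V) (x : V),
      Chain' (fun u v => ¬ (G.Adj a u ∧ G.Adj b v)) (x :: l) →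
      (∀ z ∈ (x :: l).getLast?, ¬ G.Adj a z) →
      ((x :: l).filter (fun v => G.Adj a v)).length
        + ((x :: l).filter (fun v => G.Adj b v)).length + 1
        ≤ (x :: l).length + (if G.Adj b x then 1 else 0)
  | [], x, _, hlast => by
      have hax : ¬ G.Adj a x := hlast x (by simp)
      rw [length_filter_cons (fun v => G.Adj a v) x [], length_filter_cons (fun v => G.Adj b v) x [], if_neg hax]
      simp only [filter_nil, length_nil, length_cons]
      split_ifs <;> omega
  | y :: l, x, hc, hlast => by
      obtain ⟨hR, hc'⟩ := isChain_cons_cons.1 hc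
      have hlast' : ∀ z ∈ (y :: l).getLast?, ¬ G.Adj a z := by
        intro z hz; exact hlast z (by rwa [getLast?_cons_cons])
      have IH := count_bound a b (l) y hc' hlast'
      rw [length_filter_cons (fun v => G.Adj a v) x (y :: l),
        length_filter_cons (fun v => G.Adj b v) x (y :: l), length_cons]
      by_cases hby : G.Adj b y
      · rw [if_pos hby] at IH
        have hax : ¬ G.Adj a x := fun h => hR ⟨h, hby⟩
        rw [if_neg hax]
        split_ifs <;> omega
      · rw [if_neg hby] at IH
        split_ifs <;> omega

lemma count_bound' [DecidableRel G.Adj] (a b : V) {l : List V} (hne : l ≠ [])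
    (hc : Chain' (fun u v => ¬ (G.Adj a u ∧ G.Adj b v)) l)
    (hlast : ∀ z ∈ l.getLast?, ¬ G.Adj a z)
    (hhead : ∀ z ∈ l.head?, ¬ G.Adj b z) :
    (l.filter (fun v => G.Adj a v)).length + (l.filter (fun v => G.Adj b v)).length + 1
      ≤ l.length := by
  rcases l with _ | ⟨x, l⟩
  · exact absurd rfl hne
  · have := count_bound a b l x hc hlast
    rw [if_neg (hhead x (by simp))] at this
    simpa using this

lemma degree_eq_sum [Fintype V] [DecidableRel G.Adj] [DecidableEq V] {L : List (List V)}
    (h3 : L.flatten.Nodup) (h4 : ∀ v, v ∈ L.flatten) (a : V) :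
    G.degree a = (L.map (fun l => (l.filter (fun v => G.Adj a v)).length)).sum := by
  have h1 : G.degree a = (L.flatten.filter (fun v => G.Adj a v)).length := by
    have htf : (L.flatten.filter (fun v => G.Adj a v)).toFinset
        = Finset.univ.filter (fun v => G.Adj a v) := by
      ext v
      simp only [List.mem_toFinset, List.mem_filter, Finset.mem_filter, Finset.mem_univ,
        true_and, decide_eq_true_eq, h4 v]
    rw [← SimpleGraph.card_neighborFinset_eq_degree, SimpleGraph.neighborFinset_eq_filter, ← htf,
      toFinset_card_of_nodup (h3.filter _)]
  rw [h1, filter_flatten, length_flatten, map_map]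
  congr 1

lemma card_eq_sum [Fintype V] [DecidableEq V] {L : List (List V)}
    (h3 : L.flatten.Nodup) (h4 : ∀ v, v ∈ L.flatten) :
    Fintype.card V = (L.map length).sum := by
  have htf : L.flatten.toFinset = Finset.univ := by
    ext v; simp [h4 v]
  rw [← length_flatten, ← toFinset_card_of_nodup h3, htf]
  rfl

lemma sum_split (f g : List V → ℕ) :
    ∀ L : List (List V), (∀ l ∈ L, f l + g l + 1 ≤ l.length) →
      (L.map f).sum + (L.map g).sum + L.length ≤ (L.map length).sum
  | [], _ => by simp
  | l :: L, h => by
      have h1 := h l (by simp)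
      have h2 := sum_split f g L (fun m hm => h m (by simp [hm]))
      simp only [map_cons, sum_cons, length_cons]
      omega

lemma Good.reverse_snd {p q : List V} {M : List (List V)} (h : Good G (p :: q :: M)) :
    Good G (p :: q.reverse :: M) :=
  ((h.perm (Perm.swap _ _ _)).reverse_head).perm (Perm.swap _ _ _)

lemma endpoints_nonadj {p q : List V} {M : List (List V)}
    (hG : Good G (p :: q :: M))
    (hmin : ∀ L', Good G L' → ¬ L'.length < M.length + 2) :
    ∀ x y, (x ∈ p.head? ∨ x ∈ p.getLast?) → (y ∈ q.head? ∨ y ∈ q.getLast?) →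
      ¬ G.Adj x y := by
  have core : ∀ p' q' : List V, Good G (p' :: q' :: M) →
      ∀ x ∈ p'.getLast?, ∀ y ∈ q'.head?, ¬ G.Adj x y := by
    intro p' q' hG' x hx y hy hadj
    refine hmin _ (hG'.merge fun u hu v hv => ?_) (by simp)
    rwa [Option.mem_unique hu hx, Option.mem_unique hv hy]
  rintro x y (hx | hx) (hy | hy)
  · exact core p.reverse q hG.reverse_head x (by rwa [getLast?_reverse]) y hy
  · exact core p.reverse q.reverse hG.reverse_head.reverse_snd x (by rwa [getLast?_reverse])
      y (by rwa [head?_reverse])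
  · exact core p q hG x hx y hy
  · exact core p q.reverse hG.reverse_snd x hx y (by rwa [head?_reverse])

lemma no_rot_mid {l1 l2 q : List V} {M : List (List V)} {a b : V}
    (hG : Good G (l1 :: l2 :: q :: M))
    (hmin : ∀ L', Good G L' → ¬ L'.length < M.length + 3)
    (ha : a ∈ l1.head?) (hb : b ∈ l2.head?) :
    q.Chain' (fun u v => ¬ (G.Adj a u ∧ G.Adj b v)) := by
  by_contra hch
  obtain ⟨q1, x, y, q2, rfl, hxy⟩ := chain'_split_of_not q hch
  rw [not_not] at hxy
  refine hmin _ (hG.rot1 (fun a' ha' => ?_) (fun b' hb' => ?_)) (by simp)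
  · rw [Option.mem_unique ha' ha]; exact hxy.1
  · rw [Option.mem_unique hb' hb]; exact hxy.2

lemma no_rot_self {l1 l2 : List V} {M : List (List V)} {a b : V}
    (hG : Good G (l1 :: l2 :: M))
    (hmin : ∀ L', Good G L' → ¬ L'.length < M.length + 2)
    (ha : a ∈ l1.head?) (hb : b ∈ l2.head?) :
    l1.Chain' (fun u v => ¬ (G.Adj b u ∧ G.Adj a v)) := by
  by_contra hch
  obtain ⟨q1, x, y, q2, heq, hxy⟩ := chain'_split_of_not l1 hch
  rw [not_not] at hxy
  subst heq
  refine hmin _ (hG.rot2 (fun b' hb' => ?_) (fun a' ha' => ?_)) (by simp)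
  · rw [Option.mem_unique hb' hb]; exact hxy.1
  · rw [Option.mem_unique ha' ha]; exact hxy.2

/-- Build a walk from a chain. -/
def walkOfChain : ∀ (l : List V), l.Chain' G.Adj → ∀ (h : l ≠ []), G.Walk (l.head h) (l.getLast h)
  | [x], _, _ => SimpleGraph.Walk.nil
  | x :: y :: l, hc, _ =>
      SimpleGraph.Walk.cons (List.isChain_cons_cons.1 hc).1
        ((walkOfChain (y :: l) (List.isChain_cons_cons.1 hc).2 (by simp)).copy rfl (by simp))

lemma support_walkOfChain : ∀ (l : List V) (hc : l.Chain' G.Adj) (h : l ≠ []),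
    (walkOfChain l hc h).support = l
  | [x], _, _ => rfl
  | x :: y :: l, hc, _ => by
      rw [walkOfChain]
      simp [support_walkOfChain (y :: l) (List.isChain_cons_cons.1 hc).2 (by simp)]
      exact (SimpleGraph.Walk.support_copy _ _ _).trans (support_walkOfChain _ _ _)

lemma good_to_partition (L : List (List V)) (hL : Good G L) :
    PathPartitionOn G Set.univ L.length := by
  obtain ⟨hne, hch, hnd, hcov⟩ := hL
  refine ⟨fun i => (L.get i).head (hne _ (L.get_mem i)),
    fun i => (L.get i).getLast (hne _ (L.get_mem i)),
    fun i => walkOfChain _ (hch _ (L.get_mem i)) _, ?_, ?_, ?_, ?_⟩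
  · intro i
    rw [SimpleGraph.Walk.isPath_def, support_walkOfChain]
    exact ((List.nodup_flatten.1 hnd).1 _ (L.get_mem _))
  · intro i x _; trivial
  · intro i j hij x hxi hxj
    rw [support_walkOfChain] at hxi hxj
    have hpw := (List.nodup_flatten.1 hnd).2
    rw [List.pairwise_iff_get] at hpw
    rcases lt_or_gt_of_ne (fun h => hij (by exact h)) with h | h
    · exact hpw i j h hxi hxj
    · exact hpw j i h hxj hxi
  · intro x _
    obtain ⟨l, hl, hxl⟩ := List.mem_flatten.1 (hcov x)
    obtain ⟨i, hi⟩ := List.mem_iff_get.1 hl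
    exact ⟨i, by rw [support_walkOfChain]; rw [hi]; exact hxl⟩



end Aux

theorem partition_into_paths {V : Type*} [Fintype V] (H : SimpleGraph V)
    [DecidableRel H.Adj] (r t : ℕ) (hr : Fintype.card V = r) (ht : 0 < t)
    (hdeg : ∀ x y : V, x ≠ y → ¬ H.Adj x y → r ≤ H.degree x + H.degree y + t) :
    ∃ m : ℕ, m ≤ t ∧ PathPartitionOn H Set.univ m := by
  classical
  subst hr
  -- initial good system of singletons
  have h0 : Good H ((Finset.univ.toList (α := V)).map (fun v => ([v] : List V))) := by
    have hfl : ((Finset.univ.toList (α := V)).map (fun v => ([v] : List V))).flatten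
        = Finset.univ.toList (α := V) := by
      induction Finset.univ.toList (α := V) with
      | nil => rfl
      | cons x l ih => simp [ih]
    refine ⟨?_, ?_, ?_, ?_⟩
    · intro l hl; obtain ⟨v, _, rfl⟩ := mem_map.1 hl; simp
    · intro l hl; obtain ⟨v, _, rfl⟩ := mem_map.1 hl; exact isChain_singleton v
    · rw [hfl]; exact Finset.nodup_toList _
    · intro v; rw [hfl]; exact Finset.mem_toList.2 (Finset.mem_univ v)
  have hex : ∃ n, ∃ L : List (List V), Good H L ∧ L.length = n :=
    ⟨_, _, h0, rfl⟩
  obtain ⟨L, hL, hlen⟩ := Nat.find_spec hex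
  have hmin : ∀ L', Good H L' → ¬ L'.length < L.length := by
    intro L' hL' hlt
    rw [hlen] at hlt
    exact Nat.find_min hex hlt ⟨L', hL', rfl⟩
  clear hlen
  refine ⟨L.length, ?_, good_to_partition L hL⟩
  -- now show L.length ≤ t
  rcases L with _ | ⟨l1, L'⟩
  · simp
  rcases L' with _ | ⟨l2, rest⟩
  · exact Nat.succ_le_of_lt ht
  -- the main case
  obtain ⟨h1, h2, h3, h4⟩ := hL
  have hne1 : l1 ≠ [] := h1 l1 (by simp)
  have hne2 : l2 ≠ [] := h1 l2 (by simp)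
  set a := l1.head hne1 with hadef
  set b := l2.head hne2 with hbdef
  have ha : a ∈ l1.head? := by rw [head?_eq_head hne1]; rfl
  have hb : b ∈ l2.head? := by rw [head?_eq_head hne2]; rfl
  have hGL : Good H (l1 :: l2 :: rest) := ⟨h1, h2, h3, h4⟩
  have hmin2 : ∀ L', Good H L' → ¬ L'.length < rest.length + 2 := by
    intro L' hL'
    have := hmin L' hL'
    simp only [length_cons] at this
    omega
  have hend12 := endpoints_nonadj hGL hmin2
  -- a ≠ b
  have hd := (nodup_flatten.1 h3).2
  rw [pairwise_cons] at hd
  have hdisj12 : l1.Disjoint l2 := hd.1 l2 (by simp)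
  have haneb : a ≠ b := by
    intro h
    refine hdisj12 (head_mem hne1) ?_
    rw [← hadef, h, hbdef]
    exact head_mem hne2
  have hab : ¬ H.Adj a b := hend12 a b (Or.inl ha) (Or.inl hb)
  -- per-path counting bounds
  have hbounds : ∀ l ∈ (l1 :: l2 :: rest),
      (l.filter (fun v => H.Adj a v)).length + (l.filter (fun v => H.Adj b v)).length + 1
        ≤ l.length := by
    intro l hl
    rcases mem_cons.1 hl with heq | hl
    · -- l = l1
      rw [heq]
      have hc := no_rot_self hGL hmin2 ha hb
      have hla : ∀ z ∈ l1.getLast?, ¬ H.Adj b z := by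
        intro z hz hadj
        exact hend12 z b (Or.inr hz) (Or.inl hb) hadj.symm
      have hhd : ∀ z ∈ l1.head?, ¬ H.Adj a z := by
        intro z hz
        rw [Option.mem_unique hz ha]
        exact H.irrefl
      have := count_bound' b a hne1 hc hla hhd
      omega
    rcases mem_cons.1 hl with heq | hl
    · -- l = l2
      rw [heq]
      have hGL' : Good H (l2 :: l1 :: rest) := hGL.perm (Perm.swap _ _ _)
      have hc := no_rot_self hGL' hmin2 hb ha
      have hla : ∀ z ∈ l2.getLast?, ¬ H.Adj a z := by
        intro z hz
        exact hend12 a z (Or.inl ha) (Or.inr hz)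
      have hhd : ∀ z ∈ l2.head?, ¬ H.Adj b z := by
        intro z hz
        rw [Option.mem_unique hz hb]
        exact H.irrefl
      exact count_bound' a b hne2 hc hla hhd
    · -- l ∈ rest
      obtain ⟨E, hE⟩ : ∃ E, rest ~ l :: E := ⟨_, perm_cons_erase hl⟩
      have hGq : Good H (l1 :: l2 :: l :: E) :=
        hGL.perm (Perm.cons l1 (Perm.cons l2 hE))
      have hlenE : rest.length = E.length + 1 := by
        have := hE.length_eq
        simpa using this
      have hmin3 : ∀ L', Good H L' → ¬ L'.length < E.length + 3 := by
        intro L' hL' hlt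
        exact hmin2 L' hL' (by omega)
      have hc := no_rot_mid hGq hmin3 ha hb
      have hnel : l ≠ [] := h1 l (by simp [hl])
      have hla : ∀ z ∈ l.getLast?, ¬ H.Adj a z := by
        intro z hz
        have hG' : Good H (l1 :: l :: l2 :: E) :=
          hGq.perm (Perm.cons l1 (Perm.swap _ _ _))
        refine endpoints_nonadj hG' ?_ a z (Or.inl ha) (Or.inr hz)
        intro L' hL' hlt
        refine hmin2 L' hL' ?_
        simp only [length_cons] at hlt ⊢
        omega
      have hhd : ∀ z ∈ l.head?, ¬ H.Adj b z := by
        intro z hz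
        have hG' : Good H (l2 :: l :: l1 :: E) :=
          hGq.perm ((Perm.swap _ _ _).trans (Perm.cons l2 (Perm.swap _ _ _)))
        refine endpoints_nonadj hG' ?_ b z (Or.inl hb) (Or.inl hz)
        intro L' hL' hlt
        refine hmin2 L' hL' ?_
        simp only [length_cons] at hlt ⊢
        omega
      exact count_bound' a b hnel hc hla hhd
  have hsum := sum_split (fun l => (l.filter (fun v => H.Adj a v)).length)
    (fun l => (l.filter (fun v => H.Adj b v)).length) (l1 :: l2 :: rest) hbounds
  rw [← degree_eq_sum h3 h4 a, ← degree_eq_sum h3 h4 b, ← card_eq_sum h3 h4] at hsum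
  have hdab := hdeg a b haneb hab
  omega
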